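/- Let D ⊆ ℝ^N be closed and convex, φ : ℝ^N → ℝ^N continuous, S = {f ∈ D : 0 ∈ φ(f) + N_D(f)}, and f* ∈ S. Define Υ(f) = {φ(f) + w : w ∈ N_D(f)} for f ∈ D and Υ(f) = ∅ otherwise. Assume Υ is strongly metrically regular at f* for 0 with modulus α > 0: there exist ε > 0 and δ > 0 such that dist(f, Υ⁻¹(y)) ≤ α · dist(y, Υ(f)) whenever ‖f − f*‖ ≤ ε and ‖y‖ ≤ δ, and moreover Υ⁻¹(y) ∩ {f : ‖f − f*‖ ≤ ε} is a singleton for every ‖y‖ ≤ δ. Then there exist ε' ∈ (0, ε] and ρ > 0 such that: for every map φ̂ : ℝ^N → ℝ^N with sup_{‖f − f*‖ ≤ ε} ‖φ̂(f) − φ(f)‖ ≤ ρ and every f̂ with ‖f̂ − f*‖ ≤ ε' solving 0 ∈ φ̂(f̂) + N_D(f̂), one has ‖f̂ − f*‖ ≤ α · sup_{‖f − f*‖ ≤ ε} ‖φ̂(f) − φ(f)‖. -/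

import Mathlib

open scoped RealInnerProductSpace ENNReal

/-- under strong metric regularity of `Υ(f) = φ(f) + N_D(f)` at a
solution `f*` for `0` with modulus `α`, there exist `ε' ∈ (0, ε]` and `ρ > 0` such that
for every perturbation `φ̂` with `sup_{‖f−f*‖≤ε} ‖φ̂(f) − φ(f)‖ ≤ ρ`, any solution `f̂`
of `0 ∈ φ̂(f̂) + N_D(f̂)` with `‖f̂ − f*‖ ≤ ε'` satisfies
`‖f̂ − f*‖ ≤ α · sup_{‖f−f*‖≤ε} ‖φ̂(f) − φ(f)‖`. -/
theorem strong_metric_regularity_error_bound (N : ℕ)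
    (D : Set (EuclideanSpace ℝ (Fin N))) (hDclosed : IsClosed D) (hDconv : Convex ℝ D)
    (φ : EuclideanSpace ℝ (Fin N) → EuclideanSpace ℝ (Fin N)) (hφ : Continuous φ)
    (Υ : EuclideanSpace ℝ (Fin N) → Set (EuclideanSpace ℝ (Fin N)))
    (hΥ : Υ = fun f => {y | f ∈ D ∧ ∃ w, (∀ g ∈ D, ⟪w, g - f⟫ ≤ 0) ∧ y = φ f + w})
    (S : Set (EuclideanSpace ℝ (Fin N))) (hS : S = {f | 0 ∈ Υ f})
    (fstar : EuclideanSpace ℝ (Fin N)) (hfstar : fstar ∈ S)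
    (α ε δ : ℝ) (hα : 0 < α) (hε : 0 < ε) (hδ : 0 < δ)
    (hreg : ∀ f y : EuclideanSpace ℝ (Fin N), ‖f - fstar‖ ≤ ε → ‖y‖ ≤ δ →
      EMetric.infEdist f {f' | y ∈ Υ f'} ≤ ENNReal.ofReal α * EMetric.infEdist y (Υ f))
    (hsingle : ∀ y : EuclideanSpace ℝ (Fin N), ‖y‖ ≤ δ →
      ∃! f, f ∈ {f' | y ∈ Υ f'} ∩ Metric.closedBall fstar ε) :
    ∃ ε' : ℝ, 0 < ε' ∧ ε' ≤ ε ∧ ∃ ρ : ℝ, 0 < ρ ∧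
      ∀ φhat : EuclideanSpace ℝ (Fin N) → EuclideanSpace ℝ (Fin N),
        (∀ f ∈ Metric.closedBall fstar ε, ‖φhat f - φ f‖ ≤ ρ) →
        ∀ fhat : EuclideanSpace ℝ (Fin N), ‖fhat - fstar‖ ≤ ε' →
          fhat ∈ D → (∀ g ∈ D, 0 ≤ ⟪φhat fhat, g - fhat⟫) →
          ‖fhat - fstar‖ ≤ α * ⨆ f ∈ Metric.closedBall fstar ε, ‖φhat f - φ f‖ := by
  refine ⟨ε, hε, le_refl ε, δ, hδ, ?_⟩
  intro φhat hρ fhat hfhat hfD hVI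
  have hfball : fhat ∈ Metric.closedBall fstar ε := by
    rw [Metric.mem_closedBall, dist_eq_norm]; exact hfhat
  set y : EuclideanSpace ℝ (Fin N) := φ fhat - φhat fhat with hy
  have hyn : ‖y‖ = ‖φhat fhat - φ fhat‖ := norm_sub_rev _ _
  have hyδ : ‖y‖ ≤ δ := hyn ▸ hρ fhat hfball
  have hyΥ : y ∈ Υ fhat := by
    rw [hΥ]
    refine ⟨hfD, -φhat fhat, fun g hg => ?_, by rw [hy]; abel⟩
    rw [inner_neg_left]
    linarith [hVI g hg]
  have h0 : (0 : EuclideanSpace ℝ (Fin N)) ∈ Υ fstar := by rw [hS] at hfstar; exact hfstar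
  -- regularity at fstar
  have h1 : EMetric.infEdist fstar {f' | y ∈ Υ f'} ≤ ENNReal.ofReal (α * ‖y‖) := by
    refine le_trans (hreg fstar y (by simp [hε.le]) hyδ) ?_
    rw [ENNReal.ofReal_mul hα.le]
    refine mul_le_mul_right ?_ _
    refine le_trans (EMetric.infEdist_le_edist_of_mem h0) ?_
    rw [edist_dist, dist_zero_right]
  -- fhat achieves the inf up to the singleton property
  have h2 : edist fstar fhat ≤ EMetric.infEdist fstar {f' | y ∈ Υ f'} := by
    rw [EMetric.infEdist, EMetric.le_infEdist]
    intro z hz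
    rcases le_or_gt (edist fstar z) (ENNReal.ofReal ε) with h | h
    · have hzball : z ∈ Metric.closedBall fstar ε := by
        rw [Metric.mem_closedBall, dist_comm, ← edist_le_ofReal hε.le]; exact h
      obtain ⟨u, _, hu⟩ := hsingle y hyδ
      rw [hu z ⟨hz, hzball⟩, hu fhat ⟨hyΥ, hfball⟩]
    · refine le_trans ?_ h.le
      rw [edist_le_ofReal hε.le, dist_comm, dist_eq_norm]
      exact hfhat
  have h3 : ‖fhat - fstar‖ ≤ α * ‖y‖ := by
    have := le_trans h2 h1
    rw [edist_le_ofReal (mul_nonneg hα.le (norm_nonneg _)), dist_comm, dist_eq_norm] at this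
    exact this
  -- compare ‖y‖ with the sup
  have hbdd : BddAbove (Set.range fun f => ⨆ _ : f ∈ Metric.closedBall fstar ε,
      ‖φhat f - φ f‖) := by
    refine ⟨max δ 0, ?_⟩
    rintro _ ⟨f, rfl⟩
    by_cases h : f ∈ Metric.closedBall fstar ε
    · dsimp only; rw [ciSup_pos h]; exact le_max_of_le_left (hρ f h)
    · dsimp only; simp [h]
  have h4 : ‖y‖ ≤ ⨆ f ∈ Metric.closedBall fstar ε, ‖φhat f - φ f‖ := by
    rw [hyn]
    have := le_ciSup hbdd fhat
    rwa [ciSup_pos hfball] at this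
  calc ‖fhat - fstar‖ ≤ α * ‖y‖ := h3
    _ ≤ _ := mul_le_mul_of_nonneg_left h4 hα.le
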